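/- Inversion formula with projection (Jensen–Nenciu): let $M$ be a bounded operator on a Hilbert space $\mathcal{K}$ and let $Q$ be an orthogonal projection such that $M+Q$ is invertible and $Q$ commutes suitably so that $m:=Q - Q(M+Q)^{-1}Q$ satisfies: $M$ is invertible if and only if $m$ is invertible as an operator on $Q\mathcal{K}$, and in that case $M^{-1}=(M+Q)^{-1}+(M+Q)^{-1}Q m^{\dagger} Q(M+Q)^{-1}$ where $m^\dagger$ is the inverse of $m$ on $Q\mathcal{K}$ extended by zero on $(Q\mathcal{K})^\perp$. -/
import Mathlib


/-- Jensen–Nenciu inversion formula with projection: if `Q` is an orthogonal projection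
with `M + Q` invertible, and `m = Q - Q (M+Q)⁻¹ Q`, then `M` is invertible if and only if
`m` is invertible as an operator on `QK` (encoded by a pseudo-inverse `md` supported on
`QK` with `m·md = md·m = Q`), and in that case
`M⁻¹ = (M+Q)⁻¹ + (M+Q)⁻¹ Q m† Q (M+Q)⁻¹`. -/
theorem jensen_nenciu_inversion
    {K : Type*} [NormedAddCommGroup K] [InnerProductSpace ℂ K] [CompleteSpace K]
    (M Q : K →L[ℂ] K) (hQsa : IsSelfAdjoint Q) (hQproj : Q * Q = Q)
    (hMQ : IsUnit (M + Q)) :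
    letI m := Q - Q * Ring.inverse (M + Q) * Q
    (IsUnit M ↔
        ∃ md : K →L[ℂ] K, md * Q = md ∧ Q * md = md ∧ m * md = Q ∧ md * m = Q) ∧
      ∀ md : K →L[ℂ] K, md * Q = md → Q * md = md → m * md = Q → md * m = Q →
        Ring.inverse M =
          Ring.inverse (M + Q) +
            Ring.inverse (M + Q) * Q * md * Q * Ring.inverse (M + Q) := by
  set R := Ring.inverse (M + Q) with hR
  have h1 : (M + Q) * R = 1 := Ring.mul_inverse_cancel _ hMQ
  have h2 : R * (M + Q) = 1 := Ring.inverse_mul_cancel _ hMQ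
  have e1 : M * R = 1 - Q * R := by rw [← h1]; noncomm_ring
  have e2 : R * M = 1 - R * Q := by rw [← h2]; noncomm_ring
  have hm1 : M * R * Q = Q - Q * R * Q := by rw [e1]; noncomm_ring
  have hm2 : Q * R * M = Q - Q * R * Q := by rw [mul_assoc, e2]; noncomm_ring
  have main : ∀ md : K →L[ℂ] K, md * Q = md → Q * md = md → (Q - Q * R * Q) * md = Q → md * (Q - Q * R * Q) = Q →
      M * (R + R * Q * md * Q * R) = 1 ∧ (R + R * Q * md * Q * R) * M = 1 := by
    intro md hd1 hd2 hd3 hd4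
    constructor
    · have k1 : M * R * Q * md = Q := by rw [hm1]; exact hd3
      calc M * (R + R * Q * md * Q * R) = M * R + (M * R * Q * md) * (Q * R) := by noncomm_ring
        _ = M * R + Q * (Q * R) := by rw [k1]
        _ = M * R + (Q * Q) * R := by noncomm_ring
        _ = M * R + Q * R := by rw [hQproj]
        _ = 1 := by rw [e1]; noncomm_ring
    · have k2 : md * (Q * R * M) = Q := by rw [hm2]; exact hd4
      calc (R + R * Q * md * Q * R) * M = R * M + (R * Q) * (md * (Q * R * M)) := by noncomm_ring
        _ = R * M + (R * Q) * Q := by rw [k2]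
        _ = R * M + R * (Q * Q) := by noncomm_ring
        _ = R * M + R * Q := by rw [hQproj]
        _ = 1 := by rw [e2]; noncomm_ring
  constructor
  · constructor
    · intro hM
      set M' := Ring.inverse M with hM'
      have hM1 : M * M' = 1 := Ring.mul_inverse_cancel _ hM
      have hM2 : M' * M = 1 := Ring.inverse_mul_cancel _ hM
      refine ⟨Q + Q * M' * Q, ?_, ?_, ?_, ?_⟩
      · calc (Q + Q * M' * Q) * Q = (Q * Q) + Q * M' * (Q * Q) := by noncomm_ring
          _ = Q + Q * M' * Q := by rw [hQproj]
      · calc Q * (Q + Q * M' * Q) = (Q * Q) + (Q * Q) * M' * Q := by noncomm_ring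
          _ = Q + Q * M' * Q := by rw [hQproj]
      · have hQM' : Q * M' = (M + Q) * M' - 1 := by rw [← hM1]; noncomm_ring
        have key : M * R * (Q * M') * Q = Q - M * R * Q := by
          calc M * R * (Q * M') * Q = M * R * ((M + Q) * M' - 1) * Q := by rw [hQM']
            _ = M * ((R * (M + Q)) * M') * Q - M * R * Q := by noncomm_ring
            _ = M * (1 * M') * Q - M * R * Q := by rw [h2]
            _ = (M * M') * Q - M * R * Q := by noncomm_ring
            _ = 1 * Q - M * R * Q := by rw [hM1]
            _ = Q - M * R * Q := by noncomm_ring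
        rw [← hm1]
        calc M * R * Q * (Q + Q * M' * Q)
            = M * R * (Q * Q) + M * R * (Q * Q) * M' * Q := by noncomm_ring
          _ = M * R * Q + M * R * Q * M' * Q := by rw [hQproj]
          _ = M * R * Q + M * R * (Q * M') * Q := by noncomm_ring
          _ = M * R * Q + (Q - M * R * Q) := by rw [key]
          _ = Q := by noncomm_ring
      · have hM'Q : M' * Q = M' * (M + Q) - 1 := by rw [← hM2]; noncomm_ring
        have key : Q * (M' * Q) * R * M = Q - Q * R * M := by
          calc Q * (M' * Q) * R * M = Q * (M' * (M + Q) - 1) * R * M := by rw [hM'Q]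
            _ = Q * (M' * ((M + Q) * R)) * M - Q * R * M := by noncomm_ring
            _ = Q * (M' * 1) * M - Q * R * M := by rw [h1]
            _ = Q * (M' * M) - Q * R * M := by noncomm_ring
            _ = Q * 1 - Q * R * M := by rw [hM2]
            _ = Q - Q * R * M := by noncomm_ring
        rw [← hm2]
        calc (Q + Q * M' * Q) * (Q * R * M)
            = (Q * Q) * R * M + Q * M' * (Q * Q) * R * M := by noncomm_ring
          _ = Q * R * M + Q * M' * Q * R * M := by rw [hQproj]
          _ = Q * R * M + Q * (M' * Q) * R * M := by noncomm_ring
          _ = Q * R * M + (Q - Q * R * M) := by rw [key]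
          _ = Q := by noncomm_ring
    · rintro ⟨md, hd1, hd2, hd3, hd4⟩
      obtain ⟨hMN, hNM⟩ := main md hd1 hd2 hd3 hd4
      exact ⟨⟨M, R + R * Q * md * Q * R, hMN, hNM⟩, rfl⟩
  · intro md hd1 hd2 hd3 hd4
    obtain ⟨hMN, hNM⟩ := main md hd1 hd2 hd3 hd4
    exact Ring.inverse_unit ⟨M, R + R * Q * md * Q * R, hMN, hNM⟩
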